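/- arXiv:1710.03148 — 2 statements merged into one kernel-verified Lean document; each statement's English description precedes it below -/
import Mathlib

section
/- Let A be a valued σ-structure and A' a core of A (i.e., A' is a core and A' ≡ A). Then the treewidth of A' is at most the treewidth of A, where the treewidth of a valued structure is the treewidth of the Gaifman graph of its positive part. -/
open scoped Classical
noncomputable section

/-- The value codomain `ℚ≥0 ∪ {∞}`. -/
abbrev Val : Type := WithTop NNRat

/-- A valued structure over a signature given by a type `S` of function symbols
with arities `ar`. -/
structure VStruct (S : Type) (ar : S → ℕ) where
  U : Type
  [fintypeU : Fintype U]
  [decU : DecidableEq U]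
  [nonemptyU : Nonempty U]
  val : (f : S) → (Fin (ar f) → U) → Val

attribute [instance] VStruct.fintypeU VStruct.decU VStruct.nonemptyU

variable {S : Type} [Fintype S] {ar : S → ℕ}

/-- Cost of a mapping `h` between the universes of two valued structures. -/
def VStruct.cost (A B : VStruct S ar) (h : A.U → B.U) : Val :=
  ∑ f : S, ∑ x : Fin (ar f) → A.U, A.val f x * B.val f (h ∘ x)

/-- `opt(A,B)`: the minimum cost over all mappings. -/
def VStruct.opt (A B : VStruct S ar) : Val :=
  Finset.univ.inf' Finset.univ_nonempty (A.cost B)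

/-- `f^A(g⁻¹(x))`: sum of `f^A` over the `g`-preimage of the tuple `x`. -/
def VStruct.preSum (A B : VStruct S ar) (g : A.U → B.U) (f : S)
    (x : Fin (ar f) → B.U) : Val :=
  ∑ y ∈ Finset.univ.filter (fun y : Fin (ar f) → A.U => g ∘ y = x), A.val f y

/-- Inverse fractional homomorphism from `A` to `B`. -/
def IsIFH (A B : VStruct S ar) (ω : (A.U → B.U) → NNRat) : Prop :=
  (∑ g : A.U → B.U, ω g) = 1 ∧
  ∀ (f : S) (x : Fin (ar f) → B.U),
    (∑ g : A.U → B.U, (ω g : Val) * A.preSum B g f x) ≤ B.val f x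

/-- `A ≼ B`: `A` improves `B`. -/
def Improves (A B : VStruct S ar) : Prop :=
  ∀ C : VStruct S ar, A.opt C ≤ B.opt C

/-- Valued equivalence. -/
def VEquiv (A B : VStruct S ar) : Prop :=
  ∀ C : VStruct S ar, A.opt C = B.opt C

/-- A valued structure is a core if every inverse fractional homomorphism from
it to itself has only surjective mappings in its support. -/
def IsCore (A : VStruct S ar) : Prop :=
  ∀ ω : (A.U → A.U) → NNRat, IsIFH A A ω →
    ∀ g : A.U → A.U, 0 < ω g → Function.Surjective g

/-- The Gaifman graph of the positive part of a valued structure. -/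
def gaifman (A : VStruct S ar) : SimpleGraph A.U :=
  SimpleGraph.fromRel (fun u v => ∃ (f : S) (x : Fin (ar f) → A.U),
    0 < A.val f x ∧ (∃ i, x i = u) ∧ (∃ j, x j = v))

/-- `(T, β)` (with tree `tG` on node type `T`) is a tree decomposition of `G`. -/
structure IsTreeDecomp {V T : Type} (G : SimpleGraph V) (tG : SimpleGraph T)
    (β : T → Set V) : Prop where
  isTree : tG.IsTree
  covers : ∀ v : V, ∃ t : T, v ∈ β t
  edges : ∀ ⦃u v : V⦄, G.Adj u v → ∃ t : T, u ∈ β t ∧ v ∈ β t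
  conn : ∀ v : V, (tG.induce {t : T | v ∈ β t}).Connected

/-- `G` has treewidth at most `k`. -/
def TreewidthAtMost {V : Type} (G : SimpleGraph V) (k : ℕ) : Prop :=
  ∃ (T : Type) (tG : SimpleGraph T) (β : T → Set V),
    IsTreeDecomp G tG β ∧ ∀ t : T, (β t).ncard ≤ k + 1

theorem farkas_fin : ∀ (n : ℕ) (I : Type) [Fintype I] (a : I → Fin n → ℚ) (b : I → ℚ),
    (∃ x : Fin n → ℚ, ∀ i, ∑ j, a i j * x j ≤ b i) ∨
    (∃ y : I → ℚ, (∀ i, 0 ≤ y i) ∧ (∀ j, ∑ i, y i * a i j = 0) ∧ (∑ i, y i * b i < 0)) := by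
  intro n
  induction n with
  | zero =>
    intro I _ a b
    by_cases h : ∀ i, 0 ≤ b i
    · exact Or.inl ⟨fun _ => 0, fun i => by simpa using h i⟩
    · push_neg at h
      obtain ⟨i, hi⟩ := h
      refine Or.inr ⟨fun i' => if i' = i then 1 else 0, ?_, ?_, ?_⟩
      · intro i'; dsimp only; split <;> norm_num
      · exact fun j => j.elim0
      · simpa [Finset.sum_ite_eq', mul_comm] using hi
  | succ n IH =>
    intro I _ a b
    set l : I → ℚ := fun i => a i (Fin.last n) with hl
    set a₀ : I → Fin n → ℚ := fun i => Fin.init (a i) with ha₀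
    set A' : I ⊕ (I × I) → Fin n → ℚ := Sum.elim
      (fun i => if l i = 0 then a₀ i else 0)
      (fun pq => if 0 < l pq.1 ∧ l pq.2 < 0 then (-l pq.2) • a₀ pq.1 + (l pq.1) • a₀ pq.2 else 0)
      with hA'
    set B' : I ⊕ (I × I) → ℚ := Sum.elim
      (fun i => if l i = 0 then b i else 0)
      (fun pq => if 0 < l pq.1 ∧ l pq.2 < 0 then (-l pq.2) * b pq.1 + (l pq.1) * b pq.2 else 0)
      with hB'
    -- key transfer identity
    have key : ∀ (y' : I ⊕ (I × I) → ℚ) (v : I → ℚ),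
        (∑ i', y' i' * (Sum.elim
          (fun i => if l i = 0 then v i else 0)
          (fun pq => if 0 < l pq.1 ∧ l pq.2 < 0 then (-l pq.2) * v pq.1 + (l pq.1) * v pq.2 else 0) i')) =
        ∑ i, ((if l i = 0 then y' (Sum.inl i) else 0)
          + (∑ q, if 0 < l i ∧ l q < 0 then y' (Sum.inr (i, q)) * (-l q) else 0)
          + (∑ p, if 0 < l p ∧ l i < 0 then y' (Sum.inr (p, i)) * (l p) else 0)) * v i := by
      intro y' v
      have L : (∑ i', y' i' * (Sum.elim
          (fun i => if l i = 0 then v i else 0)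
          (fun pq => if 0 < l pq.1 ∧ l pq.2 < 0 then (-l pq.2) * v pq.1 + (l pq.1) * v pq.2 else 0) i')) =
          (∑ i, if l i = 0 then y' (Sum.inl i) * v i else 0)
          + ((∑ p, ∑ q, if 0 < l p ∧ l q < 0 then y' (Sum.inr (p, q)) * (-l q) * v p else 0)
           + (∑ p, ∑ q, if 0 < l p ∧ l q < 0 then y' (Sum.inr (p, q)) * (l p) * v q else 0)) := by
        rw [Fintype.sum_sum_type, Fintype.sum_prod_type]
        congr 1
        · exact Finset.sum_congr rfl (fun i _ => by dsimp only [Sum.elim_inl]; split <;> ring)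
        · rw [← Finset.sum_add_distrib]
          refine Finset.sum_congr rfl fun p _ => ?_
          rw [← Finset.sum_add_distrib]
          refine Finset.sum_congr rfl fun q _ => ?_
          dsimp only [Sum.elim_inr]
          split <;> ring
      rw [L]
      have R1 : (∑ i, (if l i = 0 then y' (Sum.inl i) else 0) * v i)
          = ∑ i, if l i = 0 then y' (Sum.inl i) * v i else 0 :=
        Finset.sum_congr rfl (fun i _ => by split <;> ring)
      have R2 : (∑ i, (∑ q, if 0 < l i ∧ l q < 0 then y' (Sum.inr (i, q)) * (-l q) else 0) * v i)
          = ∑ p, ∑ q, if 0 < l p ∧ l q < 0 then y' (Sum.inr (p, q)) * (-l q) * v p else 0 := by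
        refine Finset.sum_congr rfl fun p _ => ?_
        rw [Finset.sum_mul]
        exact Finset.sum_congr rfl (fun q _ => by split <;> ring)
      have R3 : (∑ i, (∑ p, if 0 < l p ∧ l i < 0 then y' (Sum.inr (p, i)) * (l p) else 0) * v i)
          = ∑ p, ∑ q, if 0 < l p ∧ l q < 0 then y' (Sum.inr (p, q)) * (l p) * v q else 0 := by
        rw [Finset.sum_comm]
        refine Finset.sum_congr rfl fun p _ => ?_
        rw [Finset.sum_mul]
        exact Finset.sum_congr rfl (fun q _ => by split <;> ring)
      simp only [add_mul, Finset.sum_add_distrib, R1, R2, R3]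
      ring
    rcases IH (I ⊕ (I × I)) A' B' with ⟨x', hx'⟩ | ⟨y', hy0, hycol, hyb⟩
    · -- feasible case
      set s : I → ℚ := fun i => ∑ j, a₀ i j * x' j with hs
      have hxz : ∀ i, l i = 0 → s i ≤ b i := by
        intro i h
        have h2 := hx' (Sum.inl i)
        rw [hA', hB'] at h2
        simpa [h, hs] using h2
      have hpq : ∀ p q, 0 < l p → l q < 0 → (s q - b q) / (-l q) ≤ (b p - s p) / (l p) := by
        intro p q hp hq
        have h2 := hx' (Sum.inr (p, q))
        rw [hA', hB'] at h2
        simp only [Sum.elim_inr, if_pos (show 0 < l p ∧ l q < 0 from ⟨hp, hq⟩)] at h2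
        have h3 : (-l q) * s p + (l p) * s q ≤ (-l q) * b p + (l p) * b q := by
          have e : ∀ (c : ℚ) (w : I), (∑ j, (c • a₀ w) j * x' j) = c * s w := by
            intro c w
            rw [hs, Finset.mul_sum]
            exact Finset.sum_congr rfl (fun j _ => by simp [mul_assoc])
          calc (-l q) * s p + (l p) * s q
              = ∑ j, (((-l q) • a₀ p + (l p) • a₀ q) j) * x' j := by
                simp only [Pi.add_apply, add_mul, Finset.sum_add_distrib, e]
            _ ≤ _ := h2
        rw [div_le_div_iff₀ (by linarith) hp]
        nlinarith [h3]
      set P : Finset I := Finset.univ.filter (fun i => 0 < l i) with hP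
      set N : Finset I := Finset.univ.filter (fun i => l i < 0) with hN
      set Uf : I → ℚ := fun p => (b p - s p) / l p with hUf
      set Lf : I → ℚ := fun q => (s q - b q) / (-l q) with hLf
      set t : ℚ := if hPne : P.Nonempty then P.inf' hPne Uf
        else (if hNne : N.Nonempty then N.sup' hNne Lf else 0) with ht
      have htU : ∀ p, 0 < l p → t ≤ Uf p := by
        intro p hp
        have hPne : P.Nonempty := ⟨p, by simp [hP, hp]⟩
        rw [ht, dif_pos hPne]
        exact Finset.inf'_le Uf (by simp [hP, hp])
      have htL : ∀ q, l q < 0 → Lf q ≤ t := by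
        intro q hq
        by_cases hPne : P.Nonempty
        · rw [ht, dif_pos hPne]
          refine Finset.le_inf' hPne Uf fun p hpP => ?_
          exact hpq p q ((Finset.mem_filter.mp hpP).2) hq
        · have hNne : N.Nonempty := ⟨q, by simp [hN, hq]⟩
          rw [ht, dif_neg hPne, dif_pos hNne]
          exact Finset.le_sup' Lf (by simp [hN, hq])
      refine Or.inl ⟨Fin.snoc x' t, fun i => ?_⟩
      rw [Fin.sum_univ_castSucc]
      simp only [Fin.snoc_castSucc, Fin.snoc_last]
      have hgoal : (∑ j : Fin n, a i (Fin.castSucc j) * x' j) = s i := rfl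
      rw [hgoal]
      show s i + l i * t ≤ b i
      rcases lt_trichotomy (l i) 0 with h | h | h
      · have h4 := htL i h
        rw [hLf] at h4
        have h5 : s i - b i ≤ t * (-l i) := (div_le_iff₀ (by linarith)).mp h4
        nlinarith
      · have := hxz i h; rw [h]; linarith
      · have h4 := htU i h
        rw [hUf] at h4
        have h5 : t * l i ≤ b i - s i := (le_div_iff₀ h).mp h4
        linarith
    · -- certificate case
      refine Or.inr ⟨fun i => (if l i = 0 then y' (Sum.inl i) else 0)
          + (∑ q, if 0 < l i ∧ l q < 0 then y' (Sum.inr (i, q)) * (-l q) else 0)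
          + (∑ p, if 0 < l p ∧ l i < 0 then y' (Sum.inr (p, i)) * (l p) else 0), ?_, ?_, ?_⟩
      · intro i
        dsimp only
        refine add_nonneg (add_nonneg ?_ ?_) ?_
        · split
          · exact hy0 _
          · exact le_rfl
        · refine Finset.sum_nonneg fun q _ => ?_
          split
          · rename_i hc; exact mul_nonneg (hy0 _) (by linarith [hc.2])
          · exact le_refl 0
        · refine Finset.sum_nonneg fun p _ => ?_
          split
          · rename_i hc; exact mul_nonneg (hy0 _) (le_of_lt hc.1)
          · exact le_refl 0
      · intro j
        dsimp only
        induction j using Fin.lastCases with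
        | last =>
          rw [← key y' l]
          refine Finset.sum_eq_zero fun i' _ => ?_
          rcases i' with i | pq
          · dsimp only [Sum.elim_inl]
            split
            · rename_i h; rw [h]; ring
            · ring
          · dsimp only [Sum.elim_inr]
            split
            · ring
            · ring
        | cast j₀ =>
          show (∑ i, _ * a₀ i j₀) = 0
          rw [← key y' (fun i => a₀ i j₀)]
          refine Eq.trans (Finset.sum_congr rfl fun i' _ => ?_) (hycol j₀)
          congr 1
          rcases i' with i | pq
          · rw [hA']
            dsimp only [Sum.elim_inl]
            split <;> simp
          · rw [hA']
            dsimp only [Sum.elim_inr]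
            split <;> simp
      · dsimp only
        rw [← key y' b]
        refine lt_of_le_of_lt (le_of_eq (Finset.sum_congr rfl fun i' _ => ?_)) hyb
        rw [hB']

theorem farkas_gen {J : Type} [Fintype J] (I : Type) [Fintype I] (a : I → J → ℚ) (b : I → ℚ) :
    (∃ x : J → ℚ, ∀ i, ∑ j, a i j * x j ≤ b i) ∨
    (∃ y : I → ℚ, (∀ i, 0 ≤ y i) ∧ (∀ j, ∑ i, y i * a i j = 0) ∧ (∑ i, y i * b i < 0)) := by
  let e := Fintype.equivFin J
  rcases farkas_fin (Fintype.card J) I (fun i jf => a i (e.symm jf)) b with ⟨x, hx⟩ | ⟨y, h1, h2, h3⟩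
  · refine Or.inl ⟨fun j => x (e j), fun i => ?_⟩
    have h := hx i
    rw [← Equiv.sum_comp e (fun jf => a i (e.symm jf) * x jf)] at h
    simpa using h
  · refine Or.inr ⟨y, h1, fun j => ?_, h3⟩
    have h := h2 (e j)
    simpa using h

theorem sum_top_split {ι M : Type} [Fintype ι] [AddCommMonoid M] (P : ι → Prop) (F : ι → M)
    (h0 : ∀ i, ¬ P i → F i = 0) : ∑ i, F i = ∑ i : {j // P j}, F i.1 := by
  classical
  rw [← Finset.sum_filter_of_ne (p := P) (fun x _ hx => by_contra fun hnp => hx (h0 x hnp))]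
  exact Finset.sum_subtype _ (by simp) F

section Main

variable {S : Type} [Fintype S] {ar : S → ℕ}

theorem cost_eq_preSum (A B : VStruct S ar) (g : A.U → B.U) :
    A.cost B g = ∑ f : S, ∑ x : Fin (ar f) → B.U, A.preSum B g f x * B.val f x := by
  refine Finset.sum_congr rfl fun f _ => ?_
  unfold VStruct.preSum
  rw [eq_comm]
  calc ∑ x : Fin (ar f) → B.U,
        (∑ y ∈ Finset.univ.filter fun y : Fin (ar f) → A.U => g ∘ y = x, A.val f y) * B.val f x
      = ∑ x : Fin (ar f) → B.U,
          ∑ y ∈ Finset.univ.filter fun y : Fin (ar f) → A.U => g ∘ y = x,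
            A.val f y * B.val f (g ∘ y) := by
        refine Finset.sum_congr rfl fun x _ => ?_
        rw [Finset.sum_mul]
        refine Finset.sum_congr rfl fun y hy => ?_
        rw [(Finset.mem_filter.mp hy).2]
    _ = ∑ y : Fin (ar f) → A.U, A.val f y * B.val f (g ∘ y) :=
        Finset.sum_fiberwise _ _ _

theorem preSum_comp (A B C : VStruct S ar) (g : A.U → B.U) (g' : B.U → C.U) (f : S)
    (x : Fin (ar f) → C.U) :
    A.preSum C (g' ∘ g) f x
      = ∑ z ∈ Finset.univ.filter fun z : Fin (ar f) → B.U => g' ∘ z = x,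
          A.preSum B g f z := by
  unfold VStruct.preSum
  simp only [Finset.sum_filter]
  have step : ∀ z : Fin (ar f) → B.U,
      (if g' ∘ z = x then (∑ y : Fin (ar f) → A.U, if g ∘ y = z then A.val f y else 0) else 0)
      = ∑ y : Fin (ar f) → A.U, (if g ∘ y = z then (if g' ∘ z = x then A.val f y else 0) else 0) := by
    intro z
    split_ifs with h <;> simp [h]
  simp only [step]
  rw [Finset.sum_comm]
  refine Finset.sum_congr rfl fun y _ => ?_
  rw [Finset.sum_ite_eq]
  simp only [Finset.mem_univ, if_true]
  congr 1

set_option maxHeartbeats 1600000 in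
theorem exists_ifh (A B : VStruct S ar) (himp : ∀ C : VStruct S ar, A.opt C ≤ B.opt C) :
    ∃ ω : (A.U → B.U) → NNRat, IsIFH A B ω := by
  by_contra hno
  push_neg at hno
  set R : Type := Σ f : S, (Fin (ar f) → B.U) with hR
  set G : Type := A.U → B.U with hG
  set Pgood : G → Prop :=
    fun g => ∀ r : R, B.val r.1 r.2 ≠ ⊤ → A.preSum B g r.1 r.2 ≠ ⊤ with hPgood
  set bq : R → NNRat := fun r => WithTop.untopD 0 (B.val r.1 r.2) with hbqdef
  set cq : G → R → NNRat := fun g r => WithTop.untopD 0 (A.preSum B g r.1 r.2) with hcqdef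
  rcases farkas_gen (J := G) (R ⊕ (G ⊕ (G ⊕ (Unit ⊕ Unit))))
      (Sum.elim (fun r => fun g => if B.val r.1 r.2 = ⊤ then 0 else (cq g r : ℚ))
        (Sum.elim (fun g₀ => fun g => if g = g₀ then (-1 : ℚ) else 0)
          (Sum.elim (fun gb => fun g => if g = gb ∧ ¬ Pgood gb then (1 : ℚ) else 0)
            (Sum.elim (fun _ => fun _ => (1 : ℚ)) (fun _ => fun _ => (-1 : ℚ))))))
      (Sum.elim (fun r => if B.val r.1 r.2 = ⊤ then 0 else (bq r : ℚ))
        (Sum.elim (fun _ => 0) (Sum.elim (fun _ => 0) (Sum.elim (fun _ => 1) (fun _ => -1)))))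
      with ⟨x, hx⟩ | ⟨y, hy0, hycol, hyb⟩
  · -- feasible: build an IFH, contradicting hno
    have hxnn : ∀ g : G, 0 ≤ x g := by
      intro g
      have h := hx (Sum.inr (Sum.inl g))
      simp only [Sum.elim_inr, Sum.elim_inl, ite_mul, zero_mul, neg_one_mul,
        Finset.sum_ite_eq', Finset.mem_univ, if_true] at h
      rw [Finset.sum_ite_eq', if_pos (Finset.mem_univ _)] at h
      linarith
    have hbad : ∀ g : G, ¬ Pgood g → x g = 0 := by
      intro g hg
      have h := hx (Sum.inr (Sum.inr (Sum.inl g)))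
      simp only [Sum.elim_inr, Sum.elim_inl, ite_and, ite_mul, zero_mul, one_mul,
        Finset.sum_ite_eq', Finset.mem_univ, if_true, if_pos hg] at h
      rw [Finset.sum_ite_eq', if_pos (Finset.mem_univ _)] at h
      exact le_antisymm h (hxnn g)
    have hsum1 : ∑ g : G, x g = 1 := by
      have h1 := hx (Sum.inr (Sum.inr (Sum.inr (Sum.inl ()))))
      have h2 := hx (Sum.inr (Sum.inr (Sum.inr (Sum.inr ()))))
      simp only [Sum.elim_inr, Sum.elim_inl, one_mul, neg_one_mul,
        Finset.sum_neg_distrib] at h1 h2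
      linarith
    set ω : G → NNRat := fun g => (x g).toNNRat with hω
    refine hno ω ⟨?_, ?_⟩
    · have hQ : ((∑ g : G, ω g : NNRat) : ℚ) = ((1 : NNRat) : ℚ) := by
        push_cast
        rw [← hsum1]
        exact Finset.sum_congr rfl fun g _ => Rat.coe_toNNRat _ (hxnn g)
      exact_mod_cast hQ
    · intro f xx
      by_cases htop : B.val f xx = ⊤
      · rw [htop]; exact le_top
      · have hrow := hx (Sum.inl ⟨f, xx⟩)
        simp only [Sum.elim_inl, if_neg htop] at hrow
        have hpt : ∀ g : G, (ω g : Val) * A.preSum B g f xx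
            = ((ω g * cq g ⟨f, xx⟩ : NNRat) : Val) := by
          intro g
          by_cases hp : A.preSum B g f xx = ⊤
          · have hbg : ¬ Pgood g := fun hP => (hP ⟨f, xx⟩ htop) hp
            have hx0 : ω g = 0 := by rw [hω]; simp [hbad g hbg]
            rw [hx0]
            simp
          · obtain ⟨q, hq⟩ := WithTop.ne_top_iff_exists.mp hp
            have hcqv : cq g ⟨f, xx⟩ = q := by rw [hcqdef]; simp [← hq]
            rw [← hq, hcqv]
            push_cast
            rfl
        rw [Finset.sum_congr rfl fun g _ => hpt g]
        obtain ⟨qb, hqb⟩ := WithTop.ne_top_iff_exists.mp htop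
        have hbqv : bq ⟨f, xx⟩ = qb := by rw [hbqdef]; simp [← hqb]
        rw [show (∑ g : G, ((ω g * cq g ⟨f, xx⟩ : NNRat) : Val))
            = ((∑ g : G, ω g * cq g ⟨f, xx⟩ : NNRat) : Val) by push_cast; rfl]
        rw [← hqb, WithTop.coe_le_coe, ← NNRat.coe_le_coe]
        push_cast
        calc ∑ g : G, ((x g).toNNRat : ℚ) * (cq g ⟨f, xx⟩ : ℚ)
            = ∑ g : G, (cq g ⟨f, xx⟩ : ℚ) * x g := by
              refine Finset.sum_congr rfl fun g _ => ?_
              rw [Rat.coe_toNNRat _ (hxnn g)]; ring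
          _ ≤ (bq ⟨f, xx⟩ : ℚ) := hrow
          _ = (qb : ℚ) := by rw [hbqv]
  · -- certificate: build a separating structure C
    have hsplit : ∀ (F : (R ⊕ (G ⊕ (G ⊕ (Unit ⊕ Unit)))) → ℚ),
        (∑ i, F i) = (∑ r : R, F (Sum.inl r))
          + ((∑ g' : G, F (Sum.inr (Sum.inl g')))
          + ((∑ g' : G, F (Sum.inr (Sum.inr (Sum.inl g'))))
          + (F (Sum.inr (Sum.inr (Sum.inr (Sum.inl ()))))
             + F (Sum.inr (Sum.inr (Sum.inr (Sum.inr ()))))))) := by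
      intro F
      rw [Fintype.sum_sum_type, Fintype.sum_sum_type, Fintype.sum_sum_type, Fintype.sum_sum_type]
      simp [Fintype.sum_unique]
    have hcol : ∀ g : G, Pgood g →
        y (Sum.inr (Sum.inr (Sum.inr (Sum.inr ())))) - y (Sum.inr (Sum.inr (Sum.inr (Sum.inl ()))))
          ≤ ∑ r : R, (if B.val r.1 r.2 = ⊤ then 0 else y (Sum.inl r) * (cq g r : ℚ)) := by
      intro g hg
      have h := hycol g
      rw [hsplit] at h
      simp only [Sum.elim_inl, Sum.elim_inr, mul_ite, mul_zero, mul_one, mul_neg, ite_and,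
        Finset.sum_ite_eq, Finset.mem_univ, if_true, if_neg (not_not_intro hg)] at h
      rw [Finset.sum_ite_eq, Finset.sum_ite_eq] at h
      simp only [Finset.mem_univ, if_true, if_neg (not_not_intro hg)] at h
      have hynn := hy0 (Sum.inr (Sum.inl g))
      linarith
    have hb : (∑ r : R, (if B.val r.1 r.2 = ⊤ then 0 else y (Sum.inl r) * (bq r : ℚ)))
        + (y (Sum.inr (Sum.inr (Sum.inr (Sum.inl ()))))
           - y (Sum.inr (Sum.inr (Sum.inr (Sum.inr ()))))) < 0 := by
      have h := hyb
      rw [hsplit] at h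
      simp only [Sum.elim_inl, Sum.elim_inr, mul_ite, mul_zero, mul_one, mul_neg,
        Finset.sum_const_zero] at h
      linarith
    set uq : ℚ := y (Sum.inr (Sum.inr (Sum.inr (Sum.inl ())))) with huq
    set vq : ℚ := y (Sum.inr (Sum.inr (Sum.inr (Sum.inr ())))) with hvq
    set SB : ℚ := ∑ r : R, (if B.val r.1 r.2 = ⊤ then 0 else y (Sum.inl r) * (bq r : ℚ)) with hSB
    set MB : ℚ := ∑ r : R, (if B.val r.1 r.2 = ⊤ then 0 else (bq r : ℚ)) with hMB
    have hMBnn : 0 ≤ MB := by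
      rw [hMB]
      refine Finset.sum_nonneg fun r _ => ?_
      split
      · exact le_rfl
      · positivity
    set δ : ℚ := (vq - uq) - SB with hδdef
    have hδ : 0 < δ := by rw [hδdef]; linarith
    set ε : ℚ := δ / (2 * (MB + 1)) with hεdef
    have hε : 0 < ε := by rw [hεdef]; positivity
    have hεMB : ε * MB < δ := by
      rw [hεdef, div_mul_eq_mul_div, div_lt_iff₀ (by linarith)]
      nlinarith
    set ycoef : R → NNRat :=
      fun r => if B.val r.1 r.2 = ⊤ then 0 else (y (Sum.inl r) + ε).toNNRat with hycoef
    have hycoe : ∀ r : R, ((ycoef r : NNRat) : ℚ)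
        = if B.val r.1 r.2 = ⊤ then 0 else y (Sum.inl r) + ε := by
      intro r
      simp only [hycoef]
      split_ifs with h
      · simp
      · exact Rat.coe_toNNRat _ (by have := hy0 (Sum.inl r); linarith)
    set C : VStruct S ar := { U := B.U, val := fun f xx => ((ycoef ⟨f, xx⟩ : NNRat) : Val) }
      with hCdef
    have hCval : ∀ (f : S) (xx : Fin (ar f) → B.U), C.val f xx = ((ycoef ⟨f, xx⟩ : NNRat) : Val) :=
      fun f xx => rfl
    set T : NNRat := ∑ r : R, bq r * ycoef r with hT
    -- upper bound for B.opt C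
    have hBC : B.cost C id = (T : Val) := by
      show (∑ f : S, ∑ xx : Fin (ar f) → B.U, B.val f xx * C.val f (id ∘ xx)) = _
      simp only [Function.id_comp, hCval]
      rw [Finset.sum_sigma' Finset.univ (fun _ => Finset.univ)
        (fun f xx => B.val f xx * ((ycoef ⟨f, xx⟩ : NNRat) : Val)), Finset.univ_sigma_univ]
      have hpt : ∀ r : R, B.val r.1 r.2 * ((ycoef ⟨r.1, r.2⟩ : NNRat) : Val)
          = ((bq r * ycoef r : NNRat) : Val) := by
        intro r
        rw [Sigma.eta]
        by_cases htop : B.val r.1 r.2 = ⊤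
        · rw [show ycoef r = 0 by simp only [hycoef]; exact if_pos htop]
          simp
        · obtain ⟨qb, hqb⟩ := WithTop.ne_top_iff_exists.mp htop
          have hbqv : bq r = qb := by rw [hbqdef]; simp [← hqb]
          rw [← hqb, hbqv]
          push_cast
          try rfl
      rw [Finset.sum_congr rfl fun r _ => hpt r, hT]
      push_cast
      rfl
    have hub : B.opt C ≤ (T : Val) := hBC ▸ Finset.inf'_le _ (Finset.mem_univ id)
    -- lower bounds for A.cost C
    have hcost : ∀ g : G, A.cost C g
        = ∑ r : R, A.preSum B g r.1 r.2 * ((ycoef r : NNRat) : Val) := by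
      intro g
      rw [cost_eq_preSum A C g]
      show (∑ f : S, ∑ xx : Fin (ar f) → B.U, A.preSum B g f xx * C.val f xx) = _
      simp only [hCval]
      rw [Finset.sum_sigma' Finset.univ (fun _ => Finset.univ)
        (fun f xx => A.preSum B g f xx * ((ycoef ⟨f, xx⟩ : NNRat) : Val)), Finset.univ_sigma_univ]
    have hgood : ∀ g : G, Pgood g → (T : Val) < A.cost C g := by
      intro g hg
      rw [hcost g]
      have hpt : ∀ r : R, A.preSum B g r.1 r.2 * ((ycoef r : NNRat) : Val)
          = ((cq g r * ycoef r : NNRat) : Val) := by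
        intro r
        by_cases htop : B.val r.1 r.2 = ⊤
        · rw [show ycoef r = 0 by simp only [hycoef]; exact if_pos htop]
          simp
        · obtain ⟨qc, hqc⟩ := WithTop.ne_top_iff_exists.mp (hg r htop)
          have hcqv : cq g r = qc := by rw [hcqdef]; simp [← hqc]
          rw [← hqc, hcqv]
          push_cast
          rfl
      rw [Finset.sum_congr rfl fun r _ => hpt r]
      rw [show (∑ r : R, ((cq g r * ycoef r : NNRat) : Val))
          = ((∑ r : R, cq g r * ycoef r : NNRat) : Val) by push_cast; try rfl]
      rw [WithTop.coe_lt_coe, hT, ← NNRat.coe_lt_coe]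
      push_cast
      have hexpB : ∀ r : R, (bq r : ℚ) * ((ycoef r : NNRat) : ℚ)
          = (if B.val r.1 r.2 = ⊤ then 0 else y (Sum.inl r) * (bq r : ℚ))
            + ε * (if B.val r.1 r.2 = ⊤ then 0 else (bq r : ℚ)) := by
        intro r
        rw [hycoe r]
        split
        · ring
        · ring
      have hexpC : ∀ r : R, (cq g r : ℚ) * ((ycoef r : NNRat) : ℚ)
          ≥ (if B.val r.1 r.2 = ⊤ then 0 else y (Sum.inl r) * (cq g r : ℚ)) := by
        intro r
        rw [hycoe r]
        split
        · simp
        · have : 0 ≤ ε * (cq g r : ℚ) := by positivity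
          nlinarith
      have hB2 : (∑ r : R, (bq r : ℚ) * ((ycoef r : NNRat) : ℚ)) = SB + ε * MB := by
        rw [Finset.sum_congr rfl fun r _ => hexpB r, Finset.sum_add_distrib, ← Finset.mul_sum,
          hSB, hMB]
      have hC2 : (∑ r : R, (cq g r : ℚ) * ((ycoef r : NNRat) : ℚ))
          ≥ ∑ r : R, (if B.val r.1 r.2 = ⊤ then 0 else y (Sum.inl r) * (cq g r : ℚ)) :=
        Finset.sum_le_sum fun r _ => hexpC r
      have hcolg := hcol g hg
      calc (∑ r : R, (bq r : ℚ) * ((ycoef r : NNRat) : ℚ)) = SB + ε * MB := hB2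
        _ < vq - uq := by linarith
        _ ≤ ∑ r : R, (if B.val r.1 r.2 = ⊤ then 0 else y (Sum.inl r) * (cq g r : ℚ)) := hcolg
        _ ≤ ∑ r : R, (cq g r : ℚ) * ((ycoef r : NNRat) : ℚ) := hC2
    have hbad2 : ∀ g : G, ¬ Pgood g → (T : Val) < A.cost C g := by
      intro g hg
      have hg2 : ∃ r : R, B.val r.1 r.2 ≠ ⊤ ∧ A.preSum B g r.1 r.2 = ⊤ := by
        by_contra hc
        push_neg at hc
        exact hg fun r hr => hc r hr
      obtain ⟨r0, hr0B, hr0P⟩ := hg2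
      have htot : (∑ r : R, A.preSum B g r.1 r.2 * ((ycoef r : NNRat) : Val)) = ⊤ := by
        rw [WithTop.sum_eq_top]
        refine ⟨r0, Finset.mem_univ _, ?_⟩
        rw [hr0P]
        refine WithTop.top_mul ?_
        have hy1 : ycoef r0 = (y (Sum.inl r0) + ε).toNNRat := by
          simp only [hycoef]; exact if_neg hr0B
        have hy2 : ycoef r0 ≠ 0 := by
          rw [hy1]
          have : 0 < (y (Sum.inl r0) + ε).toNNRat :=
            Rat.toNNRat_pos.mpr (by have := hy0 (Sum.inl r0); linarith)
          exact this.ne'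
        exact_mod_cast hy2
      rw [hcost g, htot]
      exact WithTop.coe_lt_top T
    -- contradiction
    obtain ⟨gm, _, hgm⟩ := Finset.exists_mem_eq_inf' (Finset.univ_nonempty) (A.cost C)
    have hTlt : (T : Val) < A.opt C := by
      show (T : Val) < Finset.univ.inf' Finset.univ_nonempty (A.cost C)
      rw [hgm]
      by_cases hgP : Pgood gm
      · exact hgood gm hgP
      · exact hbad2 gm hgP
    exact absurd (le_trans (himp C) hub) (not_le.mpr hTlt)

theorem ifh_comp (A B C : VStruct S ar) (ω1 : (A.U → B.U) → NNRat) (ω2 : (B.U → C.U) → NNRat)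
    (h1 : IsIFH A B ω1) (h2 : IsIFH B C ω2) :
    ∃ ν : (A.U → C.U) → NNRat, IsIFH A C ν ∧
      ∀ (g : A.U → B.U) (g' : B.U → C.U), ω1 g ≠ 0 → ω2 g' ≠ 0 → ν (g' ∘ g) ≠ 0 := by
  set ν : (A.U → C.U) → NNRat :=
    fun e => ∑ g : A.U → B.U, ∑ g' : B.U → C.U, if g' ∘ g = e then ω1 g * ω2 g' else 0 with hν
  have hmass : (∑ e : A.U → C.U, ν e) = 1 := by
    rw [hν]
    rw [Finset.sum_comm]
    calc (∑ g : A.U → B.U, ∑ e : A.U → C.U, ∑ g' : B.U → C.U,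
            if g' ∘ g = e then ω1 g * ω2 g' else 0)
        = ∑ g : A.U → B.U, ∑ g' : B.U → C.U, ∑ e : A.U → C.U,
            if g' ∘ g = e then ω1 g * ω2 g' else 0 := by
          refine Finset.sum_congr rfl fun g _ => ?_
          exact Finset.sum_comm
      _ = ∑ g : A.U → B.U, ∑ g' : B.U → C.U, ω1 g * ω2 g' := by
          refine Finset.sum_congr rfl fun g _ => Finset.sum_congr rfl fun g' _ => ?_
          rw [Finset.sum_ite_eq]
          simp
      _ = (∑ g : A.U → B.U, ω1 g) * (∑ g' : B.U → C.U, ω2 g') := by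
          rw [Finset.sum_mul_sum]
      _ = 1 := by rw [h1.1, h2.1, mul_one]
  have hexp : ∀ (P : (A.U → C.U) → Val),
      (∑ e : A.U → C.U, (ν e : Val) * P e)
        = ∑ g : A.U → B.U, ∑ g' : B.U → C.U, (ω1 g : Val) * (ω2 g' : Val) * P (g' ∘ g) := by
    intro P
    have hcoe : ∀ e, ((ν e : NNRat) : Val)
        = ∑ g : A.U → B.U, ∑ g' : B.U → C.U,
            if g' ∘ g = e then (ω1 g : Val) * (ω2 g' : Val) else 0 := by
      intro e
      rw [hν]
      push_cast [apply_ite (fun q : NNRat => (q : Val))]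
      rfl
    calc (∑ e : A.U → C.U, (ν e : Val) * P e)
        = ∑ e : A.U → C.U, ∑ g : A.U → B.U, ∑ g' : B.U → C.U,
            (if g' ∘ g = e then (ω1 g : Val) * (ω2 g' : Val) else 0) * P e := by
          refine Finset.sum_congr rfl fun e _ => ?_
          rw [hcoe e, Finset.sum_mul]
          exact Finset.sum_congr rfl fun g _ => by rw [Finset.sum_mul]
      _ = ∑ g : A.U → B.U, ∑ e : A.U → C.U, ∑ g' : B.U → C.U,
            (if g' ∘ g = e then (ω1 g : Val) * (ω2 g' : Val) else 0) * P e :=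
          Finset.sum_comm
      _ = ∑ g : A.U → B.U, ∑ g' : B.U → C.U, ∑ e : A.U → C.U,
            (if g' ∘ g = e then (ω1 g : Val) * (ω2 g' : Val) else 0) * P e := by
          exact Finset.sum_congr rfl fun g _ => Finset.sum_comm
      _ = ∑ g : A.U → B.U, ∑ g' : B.U → C.U, (ω1 g : Val) * (ω2 g' : Val) * P (g' ∘ g) := by
          refine Finset.sum_congr rfl fun g _ => Finset.sum_congr rfl fun g' _ => ?_
          calc (∑ e : A.U → C.U, (if g' ∘ g = e then (ω1 g : Val) * (ω2 g' : Val) else 0) * P e)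
              = ∑ e : A.U → C.U,
                  (if g' ∘ g = e then (ω1 g : Val) * (ω2 g' : Val) * P e else 0) := by
                refine Finset.sum_congr rfl fun e _ => ?_
                split <;> simp
            _ = _ := by rw [Finset.sum_ite_eq]; simp
  refine ⟨ν, ⟨hmass, ?_⟩, ?_⟩
  · intro f x
    rw [hexp (fun e => A.preSum C e f x)]
    have hstep : ∀ g : A.U → B.U,
        (∑ g' : B.U → C.U, (ω1 g : Val) * (ω2 g' : Val) * A.preSum C (g' ∘ g) f x)
        = ∑ g' : B.U → C.U, (ω2 g' : Val) *
            ∑ z ∈ Finset.univ.filter fun z : Fin (ar f) → B.U => g' ∘ z = x,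
              (ω1 g : Val) * A.preSum B g f z := by
      intro g
      refine Finset.sum_congr rfl fun g' _ => ?_
      rw [preSum_comp A B C g g' f x, Finset.mul_sum, Finset.mul_sum]
      refine Finset.sum_congr rfl fun z _ => ?_
      ring
    rw [Finset.sum_congr rfl fun g _ => hstep g]
    rw [Finset.sum_comm]
    calc (∑ g' : B.U → C.U, ∑ g : A.U → B.U, (ω2 g' : Val) *
            ∑ z ∈ Finset.univ.filter fun z : Fin (ar f) → B.U => g' ∘ z = x,
              (ω1 g : Val) * A.preSum B g f z)
        = ∑ g' : B.U → C.U, (ω2 g' : Val) *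
            ∑ z ∈ Finset.univ.filter fun z : Fin (ar f) → B.U => g' ∘ z = x,
              ∑ g : A.U → B.U, (ω1 g : Val) * A.preSum B g f z := by
          refine Finset.sum_congr rfl fun g' _ => ?_
          rw [← Finset.mul_sum, Finset.sum_comm]
      _ ≤ ∑ g' : B.U → C.U, (ω2 g' : Val) *
            ∑ z ∈ Finset.univ.filter fun z : Fin (ar f) → B.U => g' ∘ z = x,
              B.val f z := by
          refine Finset.sum_le_sum fun g' _ => ?_
          refine mul_le_mul_right ?_ _
          exact Finset.sum_le_sum fun z _ => h1.2 f z
      _ = ∑ g' : B.U → C.U, (ω2 g' : Val) * B.preSum C g' f x := rfl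
      _ ≤ C.val f x := h2.2 f x
  · intro g g' hg hg'
    have hle : ω1 g * ω2 g' ≤ ν (g' ∘ g) := by
      have hterm : ω1 g * ω2 g'
          ≤ ∑ g0' : B.U → C.U, if g0' ∘ g = g' ∘ g then ω1 g * ω2 g0' else 0 := by
        have h := Finset.single_le_sum
          (f := fun g0' : B.U → C.U => if g0' ∘ g = g' ∘ g then ω1 g * ω2 g0' else 0)
          (fun i _ => zero_le) (Finset.mem_univ g')
        simpa using h
      have houter : (∑ g0' : B.U → C.U, if g0' ∘ g = g' ∘ g then ω1 g * ω2 g0' else 0)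
          ≤ ν (g' ∘ g) := by
        rw [hν]
        exact Finset.single_le_sum
          (f := fun g0 => ∑ g0' : B.U → C.U, if g0' ∘ g0 = g' ∘ g then ω1 g0 * ω2 g0' else 0)
          (fun i _ => zero_le) (Finset.mem_univ g)
      exact hterm.trans houter
    have : 0 < ω1 g * ω2 g' := pos_iff_ne_zero.mpr (mul_ne_zero hg hg')
    exact (lt_of_lt_of_le this hle).ne'

theorem tw_mono {V V' : Type} [Finite V] (G : SimpleGraph V) (G' : SimpleGraph V') (φ : V' → V)
    (hinj : Function.Injective φ) (hadj : ∀ u v, G'.Adj u v → G.Adj (φ u) (φ v))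
    (k : ℕ) (h : TreewidthAtMost G k) : TreewidthAtMost G' k := by
  obtain ⟨T, tG, β, hdec, hcard⟩ := h
  refine ⟨T, tG, fun t => φ ⁻¹' (β t), ⟨hdec.isTree, ?_, ?_, ?_⟩, ?_⟩
  · intro v
    obtain ⟨t, ht⟩ := hdec.covers (φ v)
    exact ⟨t, ht⟩
  · intro u v huv
    obtain ⟨t, h1, h2⟩ := hdec.edges (hadj u v huv)
    exact ⟨t, h1, h2⟩
  · intro v
    exact hdec.conn (φ v)
  · intro t
    calc (φ ⁻¹' (β t)).ncard = (φ '' (φ ⁻¹' (β t))).ncard :=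
          (Set.ncard_image_of_injective _ hinj).symm
      _ ≤ (β t).ncard := Set.ncard_le_ncard (Set.image_preimage_subset _ _) (Set.toFinite _)
      _ ≤ k + 1 := hcard t

end Main

/-- The treewidth of a core of `A` is at most the treewidth of `A`. -/
theorem stmt8 (A A' : VStruct S ar) (hcore : IsCore A') (hequiv : VEquiv A' A)
    (k : ℕ) (h : TreewidthAtMost (gaifman A) k) :
    TreewidthAtMost (gaifman A') k := by
  obtain ⟨ω1, hω1⟩ := exists_ifh A' A (fun C => (hequiv C).le)
  obtain ⟨ω2, hω2⟩ := exists_ifh A A' (fun C => (hequiv C).ge)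
  obtain ⟨g, hg⟩ : ∃ g : A'.U → A.U, ω1 g ≠ 0 := by
    by_contra hall
    push_neg at hall
    have h1 := hω1.1
    rw [Finset.sum_congr rfl fun g _ => hall g] at h1
    simp at h1
  obtain ⟨g', hg'⟩ : ∃ g' : A.U → A'.U, ω2 g' ≠ 0 := by
    by_contra hall
    push_neg at hall
    have h1 := hω2.1
    rw [Finset.sum_congr rfl fun g _ => hall g] at h1
    simp at h1
  obtain ⟨ν, hν, hsupp⟩ := ifh_comp A' A A' ω1 ω2 hω1 hω2
  have hsurj : Function.Surjective (g' ∘ g) :=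
    hcore ν hν (g' ∘ g) (pos_iff_ne_zero.mpr (hsupp g g' hg hg'))
  have hinj : Function.Injective g :=
    Function.Injective.of_comp ((Finite.injective_iff_surjective).mpr hsurj)
  have hpos : ∀ (f : S) (yv : Fin (ar f) → A'.U), 0 < A'.val f yv → 0 < A.val f (g ∘ yv) := by
    intro f yv hyv
    have hcon := hω1.2 f (g ∘ yv)
    have hterm : (ω1 g : Val) * A'.preSum A g f (g ∘ yv)
        ≤ ∑ hh : A'.U → A.U, (ω1 hh : Val) * A'.preSum A hh f (g ∘ yv) :=
      Finset.single_le_sum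
        (f := fun hh : A'.U → A.U => (ω1 hh : Val) * A'.preSum A hh f (g ∘ yv))
        (fun i _ => zero_le) (Finset.mem_univ g)
    have hys : A'.val f yv ≤ A'.preSum A g f (g ∘ yv) := by
      unfold VStruct.preSum
      refine Finset.single_le_sum (fun i _ => zero_le) ?_
      simp
    have hgpos : (0 : Val) < (ω1 g : Val) := by
      have : (0 : NNRat) < ω1 g := pos_iff_ne_zero.mpr hg
      exact_mod_cast this
    calc (0 : Val) < (ω1 g : Val) * A'.val f yv :=
          CanonicallyOrderedAdd.mul_pos.mpr ⟨hgpos, hyv⟩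
      _ ≤ (ω1 g : Val) * A'.preSum A g f (g ∘ yv) := mul_le_mul_right hys _
      _ ≤ ∑ hh : A'.U → A.U, (ω1 hh : Val) * A'.preSum A hh f (g ∘ yv) := hterm
      _ ≤ A.val f (g ∘ yv) := hcon
  refine tw_mono (gaifman A) (gaifman A') g hinj ?_ k h
  intro u v huv
  simp only [gaifman, SimpleGraph.fromRel_adj] at huv ⊢
  obtain ⟨hne, hrel⟩ := huv
  refine ⟨fun e => hne (hinj e), ?_⟩
  rcases hrel with ⟨f, xv, hv, ⟨i, hi⟩, ⟨j, hj⟩⟩ | ⟨f, xv, hv, ⟨i, hi⟩, ⟨j, hj⟩⟩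
  · exact Or.inl ⟨f, g ∘ xv, hpos f xv hv, ⟨i, by simp [hi]⟩, ⟨j, by simp [hj]⟩⟩
  · exact Or.inr ⟨f, g ∘ xv, hpos f xv hv, ⟨i, by simp [hi]⟩, ⟨j, by simp [hj]⟩⟩
end
end

section
/- Let A be a valued σ-structure. If there exists a mapping c : Tup(A) → ℚ≥0 such that for every non-surjective mapping g : A → A, Σ_{(f,x)} f^A(x)·c(f,x) < Σ_{(f,x)} f^A(x)·c(f, g(x)), then A is a core. -/
open scoped Classical
noncomputable section

variable {S : Type} [Fintype S] {ar : S → ℕ}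

--- auxiliary lemmas ---
lemma cost_comp (A B : VStruct S ar) (g : A.U → A.U) (h : A.U → B.U) :
    A.cost B (h ∘ g) =
      ∑ f : S, ∑ x : Fin (ar f) → A.U, A.preSum A g f x * B.val f (h ∘ x) := by
  unfold VStruct.cost VStruct.preSum
  refine Finset.sum_congr rfl fun f _ => ?_
  rw [← Finset.sum_fiberwise Finset.univ (fun y : Fin (ar f) → A.U => g ∘ y)
      (fun y => A.val f y * B.val f ((h ∘ g) ∘ y))]
  refine Finset.sum_congr rfl fun x _ => ?_
  rw [Finset.sum_mul]
  refine Finset.sum_congr rfl fun y hy => ?_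
  simp only [Finset.mem_filter] at hy
  rw [← hy.2]
  rfl

lemma key_ineq (A B : VStruct S ar) (ω : (A.U → A.U) → NNRat) (hω : IsIFH A A ω)
    (h : A.U → B.U) :
    ∑ g : A.U → A.U, (ω g : Val) * A.cost B (h ∘ g) ≤ A.cost B h := by
  calc ∑ g : A.U → A.U, (ω g : Val) * A.cost B (h ∘ g)
      = ∑ f : S, ∑ x : Fin (ar f) → A.U,
          (∑ g : A.U → A.U, (ω g : Val) * A.preSum A g f x) * B.val f (h ∘ x) := by
        simp_rw [cost_comp, Finset.mul_sum, Finset.sum_mul, mul_assoc]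
        rw [Finset.sum_comm]
        exact Finset.sum_congr rfl fun f _ => Finset.sum_comm
    _ ≤ ∑ f : S, ∑ x : Fin (ar f) → A.U, A.val f x * B.val f (h ∘ x) :=
        Finset.sum_le_sum fun f _ => Finset.sum_le_sum fun x _ =>
          mul_le_mul_left (hω.2 f x) _
    _ = A.cost B h := rfl


/-- Sufficient condition for being a core: existence of a weighting `c` making
every non-surjective self-map strictly suboptimal. -/
theorem stmt10 (A : VStruct S ar)
    (c : (f : S) → (Fin (ar f) → A.U) → NNRat)
    (hc : ∀ g : A.U → A.U, ¬ Function.Surjective g →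
      (∑ f : S, ∑ x : Fin (ar f) → A.U, A.val f x * (c f x : Val)) <
      (∑ f : S, ∑ x : Fin (ar f) → A.U, A.val f x * (c f (g ∘ x) : Val))) :
    IsCore A := by
  intro ω hω g hg
  by_contra hns
  let C : VStruct S ar := { U := A.U, val := fun f x => (c f x : Val) }
  obtain ⟨h, -, hhopt⟩ := Finset.exists_mem_eq_inf' (Finset.univ_nonempty) (A.cost C)
  have hhopt' : A.opt C = A.cost C h := hhopt
  have hoptle : ∀ k : A.U → C.U, A.opt C ≤ A.cost C k := fun k =>
    Finset.inf'_le _ (Finset.mem_univ k)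
  have hnshg : ¬ Function.Surjective (h ∘ g) := by
    intro hs
    have hinj : Function.Injective h := Finite.injective_iff_surjective.mpr hs.of_comp
    exact hns fun a => by obtain ⟨y, hy⟩ := hs (h a); exact ⟨y, hinj hy⟩
  have hidcost : A.cost C id = ∑ f : S, ∑ x : Fin (ar f) → A.U, A.val f x * (c f x : Val) := rfl
  have hhgcost : A.cost C (h ∘ g) =
      ∑ f : S, ∑ x : Fin (ar f) → A.U, A.val f x * (c f ((h ∘ g) ∘ x) : Val) := rfl
  have hlt : A.opt C < A.cost C (h ∘ g) := by
    calc A.opt C ≤ A.cost C id := hoptle id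
    _ < A.cost C (h ∘ g) := by rw [hidcost, hhgcost]; exact hc (h ∘ g) hnshg
  have hopttop : A.opt C ≠ ⊤ := (hlt.trans_le le_top).ne
  have hkey : ∑ g' : A.U → A.U, (ω g' : Val) * A.cost C (h ∘ g') ≤ A.opt C := by
    rw [hhopt']; exact key_ineq A C ω hω h
  have hterm : ∀ g' : A.U → A.U,
      (ω g' : Val) * A.opt C ≤ (ω g' : Val) * A.cost C (h ∘ g') := fun g' =>
    mul_le_mul_right (hoptle _) _
  have hsum1 : (∑ g' : A.U → A.U, (ω g' : Val) * A.opt C) = A.opt C := by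
    rw [← Finset.sum_mul, ← WithTop.coe_sum, hω.1]; simp
  have hsplit : ∀ F : (A.U → A.U) → Val,
      (∑ g' : A.U → A.U, F g') = F g + ∑ g' ∈ Finset.univ.erase g, F g' := fun F =>
    (Finset.add_sum_erase _ F (Finset.mem_univ g)).symm
  have e1 : (ω g : Val) * A.opt C
      + ∑ g' ∈ Finset.univ.erase g, (ω g' : Val) * A.opt C = A.opt C :=
    ((hsplit fun g' => (ω g' : Val) * A.opt C).symm).trans hsum1
  have e2 : (ω g : Val) * A.cost C (h ∘ g)
      + ∑ g' ∈ Finset.univ.erase g, (ω g' : Val) * A.opt C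
      ≤ (ω g : Val) * A.opt C
      + ∑ g' ∈ Finset.univ.erase g, (ω g' : Val) * A.opt C := by
    rw [e1]
    calc (ω g : Val) * A.cost C (h ∘ g)
        + ∑ g' ∈ Finset.univ.erase g, (ω g' : Val) * A.opt C
        ≤ (ω g : Val) * A.cost C (h ∘ g)
        + ∑ g' ∈ Finset.univ.erase g, (ω g' : Val) * A.cost C (h ∘ g') :=
          add_le_add_right (Finset.sum_le_sum fun g' _ => hterm g') _
      _ = ∑ g' : A.U → A.U, (ω g' : Val) * A.cost C (h ∘ g') :=
          (hsplit fun g' => (ω g' : Val) * A.cost C (h ∘ g')).symm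
      _ ≤ A.opt C := hkey
  have hrest : (∑ g' ∈ Finset.univ.erase g, (ω g' : Val) * A.opt C) ≠ ⊤ := by
    have hle : (∑ g' ∈ Finset.univ.erase g, (ω g' : Val) * A.opt C) ≤ A.opt C :=
      le_add_self.trans e1.le
    exact (hle.trans_lt hopttop.lt_top).ne
  have hcancel : (ω g : Val) * A.cost C (h ∘ g) ≤ (ω g : Val) * A.opt C :=
    (WithTop.add_le_add_iff_right hrest).mp e2
  have hfin : A.cost C (h ∘ g) ≤ A.opt C := by
    have h2 := mul_le_mul_right hcancel (((ω g)⁻¹ : NNRat) : Val)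
    rwa [← mul_assoc, ← mul_assoc, ← WithTop.coe_mul, inv_mul_cancel₀ (ne_of_gt hg),
      WithTop.coe_one, one_mul, one_mul] at h2
  exact absurd (hlt.trans_le hfin) (lt_irrefl _)
end
end
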